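/- Let ℓ ≥ 5 be a prime and let K be a Galois extension of ℚ of degree ℓⁿ for some n ≥ 1 in which ℓ is totally ramified. Then there is no pair of units λ, μ ∈ O_K^* with λ + μ = 1. -/

import Mathlib

open NumberField

set_option synthInstance.maxHeartbeats 1000000
set_option maxHeartbeats 1000000

/-- Let `ℓ ≥ 5` be a prime and `K` a Galois extension of `ℚ` of degree `ℓⁿ`, `n ≥ 1`,
in which `ℓ` is totally ramified (so `ℓ·O_K = 𝔏^(ℓⁿ)` for a prime `𝔏` of residue
field `𝔽_ℓ`). Then there is no pair of units `λ, μ ∈ O_K^*` with `λ + μ = 1`. -/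
theorem no_unit_equation_of_totally_ramified_ell_extension
    (ℓ : ℕ) (hℓ : ℓ.Prime) (hℓ5 : 5 ≤ ℓ) (n : ℕ) (hn : 1 ≤ n)
    (K : Type*) [Field K] [NumberField K] [IsGalois ℚ K]
    (hdeg : Module.finrank ℚ K = ℓ ^ n)
    (𝔏 : Ideal (𝓞 K)) (h𝔏 : 𝔏.IsPrime)
    (hres : Ideal.absNorm 𝔏 = ℓ)
    (hram : Ideal.span {(ℓ : 𝓞 K)} = 𝔏 ^ (ℓ ^ n)) :
    ¬ ∃ (lam mu : (𝓞 K)ˣ), (lam : 𝓞 K) + (mu : 𝓞 K) = 1 := by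
  classical
  rintro ⟨lam, mu, hsum⟩
  haveI := h𝔏
  haveI : Fact ℓ.Prime := ⟨hℓ⟩
  set R := 𝓞 K ⧸ 𝔏 with hR
  set q : 𝓞 K →+* R := Ideal.Quotient.mk 𝔏 with hq
  have hn0 : ℓ ^ n ≠ 0 := pow_ne_zero _ hℓ.pos.ne'
  have hmem : (ℓ : 𝓞 K) ∈ 𝔏 := by
    have h1 : (ℓ : 𝓞 K) ∈ Ideal.span {(ℓ : 𝓞 K)} := Ideal.mem_span_singleton_self _
    rw [hram] at h1
    exact Ideal.pow_le_self hn0 h1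
  haveI : Nontrivial R := Ideal.Quotient.nontrivial_iff.mpr h𝔏.ne_top
  have hcast : (ℓ : R) = 0 := by
    have := Ideal.Quotient.eq_zero_iff_mem.mpr hmem
    rwa [map_natCast] at this
  -- characteristic of R is ℓ
  have hchar : ringChar R = ℓ := by
    rcases hℓ.eq_one_or_self_of_dvd _ (ringChar.dvd hcast) with h | h
    · exact absurd h (CharP.ringChar_ne_one)
    · exact h
  haveI : CharP R ℓ := hchar ▸ ringChar.charP R
  -- R is finite with ℓ elements
  have hcardR : Nat.card R = ℓ := by
    rw [← hres, Ideal.absNorm_apply, Submodule.cardQuot_apply]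
  haveI : Finite R := Nat.finite_of_card_ne_zero (by rw [hcardR]; exact hℓ.pos.ne')
  haveI : Fintype R := Fintype.ofFinite R
  have hcardR' : Fintype.card R = ℓ := by rw [← Nat.card_eq_fintype_card, hcardR]
  -- the ring hom from ZMod ℓ is bijective
  set f : ZMod ℓ →+* R := ZMod.castHom dvd_rfl R with hf
  have hfinj : Function.Injective f := f.injective
  have hfsurj : Function.Surjective f := by
    have := (Fintype.bijective_iff_injective_and_card f).mpr
      ⟨hfinj, by rw [ZMod.card, hcardR']⟩
    exact this.2
  -- every automorphism of 𝓞 K preserves 𝔏 and acts trivially mod 𝔏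
  have hLrad : (Ideal.span {(ℓ : 𝓞 K)}).radical = 𝔏 := by
    rw [hram, Ideal.radical_pow (I := 𝔏) hn0, h𝔏.radical]
  have hfix : ∀ (σ : 𝓞 K ≃ₐ[ℤ] 𝓞 K) (y : 𝓞 K), y ∈ 𝔏 → σ y ∈ 𝔏 := by
    intro σ y hy
    rw [← hLrad] at hy ⊢
    obtain ⟨k, hk⟩ := hy
    obtain ⟨c, hc⟩ := Ideal.mem_span_singleton.mp hk
    refine ⟨k, Ideal.mem_span_singleton.mpr ⟨σ c, ?_⟩⟩
    rw [← map_pow, hc, map_mul, map_natCast]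
  have hσq : ∀ (σ : 𝓞 K ≃ₐ[ℤ] 𝓞 K) (x : 𝓞 K), q (σ x) = q x := by
    intro σ x
    obtain ⟨a, ha⟩ := hfsurj (q x)
    have hxa : x - (a.val : 𝓞 K) ∈ 𝔏 := by
      have h1 : ((a.val : ℕ) : R) = f a := by
        rw [hf, ZMod.castHom_apply, ZMod.natCast_val]
      rw [← Ideal.Quotient.eq_zero_iff_mem, map_sub, map_natCast, h1, ha, sub_self]
    have h2 : σ x - (a.val : 𝓞 K) ∈ 𝔏 := by
      have := hfix σ _ hxa
      rwa [map_sub, map_natCast] at this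
    have h3 : σ x - x ∈ 𝔏 := by
      have := 𝔏.sub_mem h2 hxa
      simpa using this
    have := Ideal.Quotient.eq_zero_iff_mem.mpr h3
    rw [map_sub, sub_eq_zero] at this
    exact this
  -- the norm of a unit is ±1, and reduces to the unit mod 𝔏
  have key : ∀ u : (𝓞 K)ˣ, q (u : 𝓞 K) = 1 ∨ q (u : 𝓞 K) = -1 := by
    intro u
    set N : ℤ := Algebra.norm ℤ (u : 𝓞 K) with hN
    have hNu : IsUnit N := u.isUnit.map (Algebra.norm ℤ)
    have hprod : algebraMap ℤ (𝓞 K) N =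
        ∏ σ : K ≃ₐ[ℚ] K, galRestrict ℤ ℚ K (𝓞 K) σ (u : 𝓞 K) := by
      have hinj : Function.Injective (algebraMap (𝓞 K) K) :=
        RingOfIntegers.coe_injective
      apply hinj
      rw [map_prod]
      have h1 : algebraMap (𝓞 K) K (algebraMap ℤ (𝓞 K) N) = algebraMap ℚ K (N : ℚ) := by
        rw [eq_intCast (algebraMap ℤ (𝓞 K)) N, map_intCast, map_intCast]
      rw [h1, hN, Algebra.coe_norm_int, Algebra.norm_eq_prod_automorphisms]
      exact Finset.prod_congr rfl fun σ _ =>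
        (algebraMap_galRestrict_apply (A := ℤ) σ (u : 𝓞 K)).symm
    have hq1 : q (algebraMap ℤ (𝓞 K) N) = (q (u : 𝓞 K)) ^ (ℓ ^ n) := by
      rw [hprod, map_prod]
      have : ∀ σ : K ≃ₐ[ℚ] K, q (galRestrict ℤ ℚ K (𝓞 K) σ (u : 𝓞 K)) = q (u : 𝓞 K) :=
        fun σ => hσq _ _
      rw [Finset.prod_congr rfl fun σ _ => this σ, Finset.prod_const, Finset.card_univ,
        ← Nat.card_eq_fintype_card, IsGalois.card_aut_eq_finrank, hdeg]
    have hpow : (q (u : 𝓞 K)) ^ (ℓ ^ n) = q (u : 𝓞 K) := by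
      obtain ⟨a, ha⟩ := hfsurj (q (u : 𝓞 K))
      rw [← ha, ← map_pow, ZMod.pow_card_pow]
    have hNval : q (algebraMap ℤ (𝓞 K) N) = (N : R) := by
      rw [eq_intCast (algebraMap ℤ (𝓞 K)) N, map_intCast]
    rcases Int.isUnit_iff.mp hNu with h | h
    · left; rw [← hpow, ← hq1, hNval, h, Int.cast_one]
    · right; rw [← hpow, ← hq1, hNval, h]; simp
  -- conclude
  have hsum' : q (lam : 𝓞 K) + q (mu : 𝓞 K) = 1 := by
    rw [← map_add, hsum, map_one]
  have h3ne : (3 : R) ≠ 0 := by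
    intro h0
    have : ℓ ∣ 3 := (CharP.cast_eq_zero_iff R ℓ 3).mp h0
    have := Nat.le_of_dvd (by norm_num) this
    omega
  rcases key lam with h1 | h1 <;> rcases key mu with h2 | h2 <;>
    rw [h1, h2] at hsum'
  · exact one_ne_zero (by linear_combination hsum')
  · exact one_ne_zero (by linear_combination -hsum')
  · exact one_ne_zero (by linear_combination -hsum')
  · exact h3ne (by linear_combination -hsum')
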